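/- For every M > 0 there exist μ > 0 and C > 0 such that the following holds. Let c₃, γ ∈ ℝ with |c₃| + |γ| ≤ μ, and let U solve the profile ODE with parameters (c₃, γ) and satisfy sup_{y ∈ (−1,1)} |U(y)| ≤ M(|c₃| + |γ|). Then for all y ∈ (−1,1), |U'(y) − c₃ ln(1−y²)| ≤ C (|c₃| + |γ|). -/

import Mathlib

set_option maxHeartbeats 1000000
open Set

/-- `U` solves the profile ODE with parameters `(c₃, γ)`:
`U` is continuous on `[-1,1]`, `C²` on `(-1,1)`, satisfies
`(1-y²)U' + 2yU + U²/2 = c₃(1-y²)` on `(-1,1)`, and `U(0) = γ`. -/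
def SolvesProfileODE (c₃ γ : ℝ) (U : ℝ → ℝ) : Prop :=
  ContinuousOn U (Icc (-1) 1) ∧
  ContDiffOn ℝ 2 U (Ioo (-1) 1) ∧
  (∀ y ∈ Ioo (-1 : ℝ) 1,
    (1 - y ^ 2) * deriv U y + 2 * y * U y + (1 / 2) * (U y) ^ 2 = c₃ * (1 - y ^ 2)) ∧
  U 0 = γ

lemma log_sq_le {x : ℝ} (hx : 0 < x) (hx1 : x ≤ 1) :
    (Real.log x)^2 ≤ 16 / Real.sqrt x := by
  have hinv : (1:ℝ) ≤ x⁻¹ := (one_le_inv_iff₀.2 ⟨hx, hx1⟩)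
  have hs : (0:ℝ) < Real.sqrt x⁻¹ := Real.sqrt_pos.2 (by positivity)
  have hss : (0:ℝ) < Real.sqrt (Real.sqrt x⁻¹) := Real.sqrt_pos.2 hs
  have h4 : Real.log x⁻¹ = 4 * Real.log (Real.sqrt (Real.sqrt x⁻¹)) := by
    rw [Real.log_sqrt hs.le, Real.log_sqrt (by positivity)]; ring
  have hle : Real.log (Real.sqrt (Real.sqrt x⁻¹)) ≤ Real.sqrt (Real.sqrt x⁻¹) :=
    (Real.log_le_sub_one_of_pos hss).trans (by linarith)
  have hnn : 0 ≤ Real.log x⁻¹ := Real.log_nonneg hinv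
  have heq : (Real.log x)^2 = (Real.log x⁻¹)^2 := by rw [Real.log_inv]; ring
  have h2 : (Real.log x⁻¹)^2 ≤ 16 * (Real.sqrt (Real.sqrt x⁻¹))^2 := by nlinarith
  have h3 : (Real.sqrt (Real.sqrt x⁻¹))^2 = Real.sqrt x⁻¹ := Real.sq_sqrt hs.le
  have h5 : Real.sqrt x⁻¹ = (Real.sqrt x)⁻¹ := Real.sqrt_inv x
  rw [heq]
  rw [h3, h5] at h2
  calc (Real.log x⁻¹)^2 ≤ 16 * (Real.sqrt x)⁻¹ := h2
    _ = 16 / Real.sqrt x := by ring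

lemma abs_mul_log_le {t : ℝ} (h0 : 0 < t) (h2 : t ≤ 2) : |t * Real.log t| ≤ 2 := by
  rcases le_or_gt t 1 with h1 | h1
  · have hlt : Real.log t ≤ 0 := Real.log_nonpos h0.le h1
    have hs : (0:ℝ) < Real.sqrt t⁻¹ := Real.sqrt_pos.2 (by positivity)
    have hinv : Real.log t⁻¹ = 2 * Real.log (Real.sqrt t⁻¹) := by
      rw [Real.log_sqrt (by positivity)]; ring
    have hle : Real.log (Real.sqrt t⁻¹) ≤ Real.sqrt t⁻¹ :=
      (Real.log_le_sub_one_of_pos hs).trans (by linarith)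
    have hts : t * Real.sqrt t⁻¹ = Real.sqrt t := by
      rw [Real.sqrt_inv, ← div_eq_mul_inv]; exact Real.div_sqrt
    have hst : Real.sqrt t ≤ 1 := by
      rw [show (1:ℝ) = Real.sqrt 1 by simp]
      exact Real.sqrt_le_sqrt h1
    rw [abs_of_nonpos (mul_nonpos_of_nonneg_of_nonpos h0.le hlt)]
    have hli : Real.log t = -Real.log t⁻¹ := by rw [Real.log_inv]; ring
    rw [hli, hinv]
    have := mul_le_mul_of_nonneg_left hle h0.le
    nlinarith
  · have hpos : 0 ≤ Real.log t := Real.log_nonneg h1.le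
    have : Real.log t ≤ 1 := (Real.log_le_sub_one_of_pos h0).trans (by linarith)
    rw [abs_of_nonneg (by positivity)]
    nlinarith

lemma bootstrap (ε : ℝ) (hε : 0 < ε) (hεμ : ε ≤ 1/1000)
    (V A : ℝ → ℝ)
    (hA : ∀ y ∈ Ioo (-1:ℝ) 1, HasDerivAt A ((V y)^2) y)
    (hA0 : A 0 = 0)
    (hVb : ∀ y ∈ Ico (0:ℝ) 1, |V y| ≤ 2*ε*(1 + |Real.log (1-y)|) + |A y|/2) :
    ∀ y ∈ Ico (0:ℝ) 1, A y ≤ ε := by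
  by_contra hcon
  push_neg at hcon
  obtain ⟨y₀, hy₀, hAy₀⟩ := hcon
  have hy₀I : Icc (0:ℝ) y₀ ⊆ Ioo (-1:ℝ) 1 := fun s hs =>
    ⟨by linarith [hs.1], lt_of_le_of_lt hs.2 hy₀.2⟩
  -- A monotone on Icc 0 y₀
  have hmono : MonotoneOn A (Icc (0:ℝ) y₀) := by
    apply monotoneOn_of_deriv_nonneg (convex_Icc _ _)
    · exact fun s hs => ((hA s (hy₀I hs)).continuousAt).continuousWithinAt
    · intro s hs
      rw [interior_Icc] at hs
      exact ((hA s (hy₀I (Ioo_subset_Icc_self hs))).differentiableAt).differentiableWithinAt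
    · intro s hs
      rw [interior_Icc] at hs
      rw [(hA s (hy₀I (Ioo_subset_Icc_self hs))).deriv]
      positivity
  -- IVT : get t with A t = ε
  have hcont : ContinuousOn A (Icc (0:ℝ) y₀) := fun s hs =>
    ((hA s (hy₀I hs)).continuousAt).continuousWithinAt
  have hivt := intermediate_value_Icc hy₀.1 hcont
  have hmem : ε ∈ Icc (A 0) (A y₀) := ⟨by rw [hA0]; exact hε.le, hAy₀.le⟩
  obtain ⟨t, ht, hAt⟩ := hivt hmem
  have ht1 : t < 1 := lt_of_le_of_lt ht.2 hy₀.2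
  have htI : Icc (0:ℝ) t ⊆ Ioo (-1:ℝ) 1 := fun s hs =>
    ⟨by linarith [hs.1], lt_of_le_of_lt hs.2 ht1⟩
  -- On [0,t], 0 ≤ A s ≤ ε
  have hAle : ∀ s ∈ Icc (0:ℝ) t, 0 ≤ A s ∧ A s ≤ ε := by
    intro s hs
    have hsm : s ∈ Icc (0:ℝ) y₀ := ⟨hs.1, hs.2.trans ht.2⟩
    refine ⟨?_, ?_⟩
    · rw [← hA0]
      exact hmono ⟨le_refl 0, hy₀.1⟩ hsm hs.1
    · rw [← hAt]
      exact hmono hsm ht hs.2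
  -- Barrier function
  set φ : ℝ → ℝ := fun s => 18*ε^2*s + 576*ε^2*(1 - Real.sqrt (1-s)) with hφdef
  have hφd : ∀ s ∈ Icc (0:ℝ) t, HasDerivAt φ (18*ε^2 + 288*ε^2/Real.sqrt (1-s)) s := by
    intro s hs
    have h1s : (0:ℝ) < 1 - s := by
      have := hs.2.trans_lt ht1; linarith
    have hsq0 : (0:ℝ) < Real.sqrt (1-s) := Real.sqrt_pos.2 h1s
    have hsub : HasDerivAt (fun s : ℝ => 1 - s) (-1) s := by
      simpa using (hasDerivAt_id s).const_sub (1:ℝ)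
    have hsq : HasDerivAt (fun s : ℝ => Real.sqrt (1-s))
        (1 / (2 * Real.sqrt (1-s)) * (-1)) s :=
      (Real.hasDerivAt_sqrt h1s.ne').comp s hsub
    have h1 : HasDerivAt (fun s : ℝ => 18*ε^2*s) (18*ε^2) s := by
      simpa using (hasDerivAt_id s).const_mul (18*ε^2)
    have h2 : HasDerivAt (fun s : ℝ => 576*ε^2*(1 - Real.sqrt (1-s)))
        (576*ε^2*(0 - 1 / (2 * Real.sqrt (1-s)) * (-1))) s :=
      ((hasDerivAt_const s (1:ℝ)).sub hsq).const_mul (576*ε^2)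
    have := h1.add h2
    refine this.congr_deriv ?_
    field_simp
    ring
  -- g = φ - A is monotone on [0,t]
  have hg : MonotoneOn (fun s => φ s - A s) (Icc (0:ℝ) t) := by
    apply monotoneOn_of_deriv_nonneg (convex_Icc _ _)
    · exact fun s hs => (((hφd s hs).sub (hA s (htI hs))).continuousAt).continuousWithinAt
    · intro s hs
      rw [interior_Icc] at hs
      have hs' : s ∈ Icc (0:ℝ) t := Ioo_subset_Icc_self hs
      exact (((hφd s hs').sub (hA s (htI hs'))).differentiableAt).differentiableWithinAt
    · intro s hs
      rw [interior_Icc] at hs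
      have hs' : s ∈ Icc (0:ℝ) t := Ioo_subset_Icc_self hs
      rw [show deriv (fun s => φ s - A s) s = _ from ((hφd s hs').sub (hA s (htI hs'))).deriv]
      have h1s : (0:ℝ) < 1 - s := by
        have := hs'.2.trans_lt ht1; linarith
      have h1s1 : 1 - s ≤ 1 := by linarith [hs'.1]
      have hsq0 : (0:ℝ) < Real.sqrt (1-s) := Real.sqrt_pos.2 h1s
      have hsq1 : Real.sqrt (1-s) ≤ 1 := by
        have : Real.sqrt (1-s) ≤ Real.sqrt 1 := Real.sqrt_le_sqrt h1s1
        simpa using this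
      have hL2 : (Real.log (1-s))^2 ≤ 16 / Real.sqrt (1-s) := log_sq_le h1s h1s1
      have hV : |V s| ≤ 2*ε*(1 + |Real.log (1-s)|) + |A s|/2 :=
        hVb s ⟨hs'.1, by linarith⟩
      have hAs := hAle s hs'
      have habsA : |A s| ≤ ε := abs_le.2 ⟨by linarith [hAs.1], hAs.2⟩
      have hLnn : (0:ℝ) ≤ |Real.log (1-s)| := abs_nonneg _
      have hV2 : (V s)^2 ≤ (2*ε*(1 + |Real.log (1-s)|) + ε/2)^2 := by
        have h' : |V s| ≤ 2*ε*(1 + |Real.log (1-s)|) + ε/2 := by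
          calc |V s| ≤ 2*ε*(1 + |Real.log (1-s)|) + |A s|/2 := hV
            _ ≤ _ := by linarith
        calc (V s)^2 = |V s|^2 := (sq_abs _).symm
          _ ≤ _ := by nlinarith [abs_nonneg (V s)]
      have hLsq : |Real.log (1-s)|^2 ≤ 16 / Real.sqrt (1-s) := by
        rw [sq_abs]; exact hL2
      have hLq : |Real.log (1-s)|^2 ≤ 16 / Real.sqrt (1-s) := hLsq
      have hkey : (2*ε*(1 + |Real.log (1-s)|) + ε/2)^2 ≤ 18*ε^2 + 288*ε^2/Real.sqrt (1-s) := by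
        set L := |Real.log (1-s)| with hLdef
        set q := Real.sqrt (1-s) with hqdef
        have h16 : L^2 * q ≤ 16 := (le_div_iff₀ hsq0).1 hLq
        rw [show 18*ε^2 + 288*ε^2/q = (18*ε^2*q + 288*ε^2)/q by field_simp, le_div_iff₀ hsq0]
        have hLq2 : (L*q)^2 ≤ 16 := by nlinarith
        have hLq4 : L*q ≤ 4 := by nlinarith [mul_nonneg hLnn hsq0.le]
        have p2 : ε^2*(L*q) ≤ ε^2*4 := mul_le_mul_of_nonneg_left hLq4 (sq_nonneg ε)
        have p1 : ε^2*(L^2*q) ≤ ε^2*16 := mul_le_mul_of_nonneg_left h16 (sq_nonneg ε)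
        have p3 : ε^2*q ≤ ε^2*1 := mul_le_mul_of_nonneg_left hsq1 (sq_nonneg ε)
        have p4 : 0 ≤ ε^2*q := mul_nonneg (sq_nonneg ε) hsq0.le
        nlinarith [p1, p2, p3, p4]
      have : (V s)^2 ≤ 18*ε^2 + 288*ε^2/Real.sqrt (1-s) := hV2.trans hkey
      linarith
  -- conclude
  have h0m : (0:ℝ) ∈ Icc (0:ℝ) t := ⟨le_refl 0, ht.1⟩
  have htm : t ∈ Icc (0:ℝ) t := ⟨ht.1, le_refl t⟩
  have hgle := hg h0m htm ht.1
  have hφ0 : φ 0 = 0 := by simp [hφdef, Real.sqrt_one]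
  have hφt : φ t ≤ 594*ε^2 := by
    have h1 : Real.sqrt (1-t) ≥ 0 := Real.sqrt_nonneg _
    have h2 : t ≤ 1 := ht1.le
    simp only [hφdef]
    nlinarith [sq_nonneg ε]
  simp only [hφ0, hA0, sub_zero] at hgle
  nlinarith

noncomputable def at1 (y : ℝ) : ℝ := (Real.log (1+y) - Real.log (1-y))/2

lemma at1_hasDeriv {z : ℝ} (hz : z ∈ Ioo (-1:ℝ) 1) :
    HasDerivAt at1 (1/(1-z^2)) z := by
  have h1p : (0:ℝ) < 1 + z := by linarith [hz.1]
  have h1m : (0:ℝ) < 1 - z := by linarith [hz.2]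
  have ha : HasDerivAt (fun z : ℝ => 1 + z) 1 z := by
    simpa using (hasDerivAt_id z).const_add (1:ℝ)
  have hb : HasDerivAt (fun z : ℝ => 1 - z) (-1) z := by
    simpa using (hasDerivAt_id z).const_sub (1:ℝ)
  have hl1 : HasDerivAt (fun z : ℝ => Real.log (1+z)) (1/(1+z)) z := by
    simpa using ha.log h1p.ne'
  have hl2 : HasDerivAt (fun z : ℝ => Real.log (1-z)) (-1/(1-z)) z := by
    simpa using hb.log h1m.ne'
  have hne : (1:ℝ) - z^2 ≠ 0 := by nlinarith [hz.1, hz.2]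
  have := (hl1.sub hl2).div_const 2
  refine this.congr_deriv ?_
  field_simp
  ring

lemma log_abs_le {w : ℝ} (h1 : 1 ≤ w) (h2 : w ≤ 2) : |Real.log w| ≤ 1 := by
  rw [abs_of_nonneg (Real.log_nonneg h1)]
  exact (Real.log_le_sub_one_of_pos (by linarith)).trans (by linarith)

lemma at1_bound {z : ℝ} (hz : z ∈ Ioo (-1:ℝ) 1) :
    |at1 z| ≤ 1 + |Real.log (1-|z|)| := by
  have h1p : (0:ℝ) < 1 + z := by linarith [hz.1]
  have h1m : (0:ℝ) < 1 - z := by linarith [hz.2]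
  have htri : |at1 z| ≤ (|Real.log (1+z)| + |Real.log (1-z)|)/2 := by
    rw [at1, abs_div, abs_two]
    have := abs_sub (Real.log (1+z)) (Real.log (1-z))
    linarith
  rcases le_or_gt 0 z with h | h
  · rw [abs_of_nonneg h]
    have h1 : |Real.log (1+z)| ≤ 1 := log_abs_le (by linarith) (by linarith [hz.2])
    calc |at1 z| ≤ (|Real.log (1+z)| + |Real.log (1-z)|)/2 := htri
      _ ≤ 1 + |Real.log (1-z)| := by
          have := abs_nonneg (Real.log (1-z)); linarith
  · rw [abs_of_neg h]
    have h1 : |Real.log (1-z)| ≤ 1 := log_abs_le (by linarith) (by linarith [hz.1])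
    have he : (1:ℝ) - -z = 1 + z := by ring
    rw [he]
    calc |at1 z| ≤ (|Real.log (1+z)| + |Real.log (1-z)|)/2 := htri
      _ ≤ 1 + |Real.log (1+z)| := by
          have := abs_nonneg (Real.log (1+z)); linarith

/-- Asymptotics of `U'` (Lemma 2.1, estimate (2.3)). -/
theorem stmt6 (M : ℝ) (hM : 0 < M) :
    ∃ μ > 0, ∃ C > 0, ∀ c₃ γ : ℝ, |c₃| + |γ| ≤ μ →
      ∀ U : ℝ → ℝ, SolvesProfileODE c₃ γ U →
        (∀ y ∈ Ioo (-1 : ℝ) 1, |U y| ≤ M * (|c₃| + |γ|)) →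
        ∀ y ∈ Ioo (-1 : ℝ) 1,
          |deriv U y - c₃ * Real.log (1 - y ^ 2)| ≤ C * (|c₃| + |γ|) := by
  refine ⟨1/1000, by norm_num, 1000, by norm_num, ?_⟩
  intro c₃ γ hμ U hsol hbound y hy
  obtain ⟨hcont, hC2, hode, hU0⟩ := hsol
  set ε := |c₃| + |γ| with hεdef
  have hε0 : 0 ≤ ε := by positivity
  have hc3 : |c₃| ≤ ε := le_add_of_nonneg_right (abs_nonneg γ)
  have hγ : |γ| ≤ ε := le_add_of_nonneg_left (abs_nonneg c₃)
  clear_value ε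
  rcases eq_or_lt_of_le hε0 with hε | hε
  · -- degenerate case ε = 0
    have hc0 : c₃ = 0 := by
      have : |c₃| = 0 := le_antisymm (by rw [← hε] at hc3; exact hc3) (abs_nonneg _)
      exact abs_eq_zero.1 this
    have hU : ∀ z ∈ Ioo (-1:ℝ) 1, U z = 0 := by
      intro z hz
      have h := hbound z hz
      rw [← hε, mul_zero] at h
      exact abs_eq_zero.1 (le_antisymm h (abs_nonneg _))
    have hev : U =ᶠ[nhds y] (fun _ => (0:ℝ)) := by
      filter_upwards [Ioo_mem_nhds hy.1 hy.2] with z hz using hU z hz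
    have hd : deriv U y = 0 := by rw [hev.deriv_eq, deriv_const]
    rw [hd, hc0, ← hε]
    simp
  · -- main case ε > 0
    have hεμ : ε ≤ 1/1000 := hμ
    have hdiffOn : DifferentiableOn ℝ U (Ioo (-1:ℝ) 1) :=
      hC2.differentiableOn (by norm_num)
    set V : ℝ → ℝ := fun z => U z / (1 - z^2) with hVdef
    set A : ℝ → ℝ := fun z => 2*(γ + c₃ * at1 z - V z) with hAdef
    have hne : ∀ z ∈ Ioo (-1:ℝ) 1, (0:ℝ) < 1 - z^2 := by
      intro z hz; nlinarith [hz.1, hz.2]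
    have hUV : ∀ z ∈ Ioo (-1:ℝ) 1, U z = (1-z^2) * V z := by
      intro z hz
      rw [hVdef]
      field_simp [(hne z hz).ne']
    have hdU : ∀ z ∈ Ioo (-1:ℝ) 1,
        deriv U z = c₃ - 2*z*V z - (1-z^2)*(V z)^2/2 := by
      intro z hz
      have h := hode z hz
      rw [hUV z hz] at h
      have h2 : (1-z^2) * deriv U z
          = (1-z^2) * (c₃ - 2*z*V z - (1-z^2)*(V z)^2/2) := by ring_nf; ring_nf at h; linarith
      exact mul_left_cancel₀ (hne z hz).ne' h2
    have hVd : ∀ z ∈ Ioo (-1:ℝ) 1,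
        HasDerivAt V (c₃/(1-z^2) - (V z)^2/2) z := by
      intro z hz
      have hU' : HasDerivAt U (deriv U z) z :=
        ((hdiffOn z hz).differentiableAt (Ioo_mem_nhds hz.1 hz.2)).hasDerivAt
      have hden : HasDerivAt (fun z:ℝ => 1 - z^2) (-(2*z)) z := by
        simpa using (hasDerivAt_pow 2 z).const_sub (1:ℝ)
      have hd := hU'.div hden (hne z hz).ne'
      refine hd.congr_deriv ?_
      rw [hdU z hz, hUV z hz]
      field_simp [(hne z hz).ne']
      ring
    have hAd : ∀ z ∈ Ioo (-1:ℝ) 1, HasDerivAt A ((V z)^2) z := by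
      intro z hz
      have h := (((at1_hasDeriv hz).const_mul c₃).const_add γ).sub (hVd z hz)
      have h2 := h.const_mul (2:ℝ)
      refine h2.congr_deriv ?_
      field_simp [(hne z hz).ne']
      try ring
    have hA0 : A 0 = 0 := by
      simp [hAdef, hVdef, at1, hU0]
    have hVid : ∀ z, V z = γ + c₃ * at1 z - A z/2 := by
      intro z; rw [hAdef]; ring
    clear_value V A
    have hVbound : ∀ z ∈ Ioo (-1:ℝ) 1,
        |V z| ≤ 2*ε*(1 + |Real.log (1-|z|)|) + |A z|/2 := by
      intro z hz
      have hb := at1_bound hz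
      have h1 : |V z| ≤ |γ| + |c₃| * |at1 z| + |A z|/2 := by
        rw [hVid z]
        calc |γ + c₃ * at1 z - A z/2| ≤ |γ + c₃ * at1 z| + |A z/2| := abs_sub _ _
          _ ≤ |γ| + |c₃ * at1 z| + |A z|/2 := by
              rw [abs_div, abs_two]
              linarith [abs_add_le γ (c₃ * at1 z)]
          _ = |γ| + |c₃| * |at1 z| + |A z|/2 := by rw [abs_mul]
      have h2 : |c₃| * |at1 z| ≤ ε * (1 + |Real.log (1-|z|)|) :=
        mul_le_mul hc3 hb (abs_nonneg _) hε0
      have h3 : ε ≤ ε * (1 + |Real.log (1-|z|)|) := by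
        nlinarith [abs_nonneg (Real.log (1-|z|))]
      linarith [hγ]
    -- bootstrap on the right
    have B1 : ∀ z ∈ Ico (0:ℝ) 1, A z ≤ ε := by
      apply bootstrap ε hε hεμ V A hAd hA0
      intro z hz
      have hzI : z ∈ Ioo (-1:ℝ) 1 := ⟨by linarith [hz.1], hz.2⟩
      have := hVbound z hzI
      rwa [abs_of_nonneg hz.1] at this
    -- bootstrap on the left (reflected)
    have B2 : ∀ z ∈ Ico (0:ℝ) 1, -A (-z) ≤ ε := by
      apply bootstrap ε hε hεμ (fun z => V (-z)) (fun z => -A (-z)) ?_ (by simp [hA0]) ?_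
      · intro z hz
        have hzI : (-z) ∈ Ioo (-1:ℝ) 1 := ⟨by linarith [hz.2], by linarith [hz.1]⟩
        have h := (hAd (-z) hzI).comp z (hasDerivAt_neg z)
        have h2 := h.neg
        refine h2.congr_deriv ?_
        ring
      · intro z hz
        have hzI : (-z) ∈ Ioo (-1:ℝ) 1 := ⟨by linarith [hz.2], by linarith [hz.1]⟩
        have := hVbound (-z) hzI
        rw [abs_neg, abs_of_nonneg hz.1] at this
        simpa [abs_neg] using this
    -- monotonicity of A
    have hAmono : MonotoneOn A (Ioo (-1:ℝ) 1) := by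
      apply monotoneOn_of_deriv_nonneg (convex_Ioo _ _)
      · exact fun z hz => ((hAd z hz).continuousAt).continuousWithinAt
      · intro z hz
        rw [interior_Ioo] at hz
        exact ((hAd z hz).differentiableAt).differentiableWithinAt
      · intro z hz
        rw [interior_Ioo] at hz
        rw [(hAd z hz).deriv]
        positivity
    have h0I : (0:ℝ) ∈ Ioo (-1:ℝ) 1 := by norm_num
    have hAabs : ∀ z ∈ Ioo (-1:ℝ) 1, |A z| ≤ ε := by
      intro z hz
      rcases le_or_gt 0 z with h | h
      · have hge : 0 ≤ A z := by
          rw [← hA0]; exact hAmono h0I hz h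
        have hle : A z ≤ ε := B1 z ⟨h, hz.2⟩
        rw [abs_of_nonneg hge]; exact hle
      · have hle : A z ≤ 0 := by
          rw [← hA0]; exact hAmono hz h0I h.le
        have hge : -ε ≤ A z := by
          have := B2 (-z) ⟨by linarith, by linarith [hz.1]⟩
          rw [neg_neg] at this
          linarith
        rw [abs_of_nonpos hle]; linarith
    -- final assembly at y
    have h1p : (0:ℝ) < 1 + y := by linarith [hy.1]
    have h1m : (0:ℝ) < 1 - y := by linarith [hy.2]
    have hid : Real.log (1-y^2) = Real.log (1+y) + Real.log (1-y) := by
      rw [show (1:ℝ)-y^2 = (1+y)*(1-y) by ring]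
      exact Real.log_mul h1p.ne' h1m.ne'
    have hid2 : 2*y*at1 y + Real.log (1-y^2)
        = (1+y)*Real.log (1+y) + (1-y)*Real.log (1-y) := by
      rw [hid, at1]; ring
    have key : deriv U y - c₃ * Real.log (1-y^2)
        = (c₃ - 2*y*γ) - c₃ * ((1+y)*Real.log (1+y) + (1-y)*Real.log (1-y))
          + y * A y - (1-y^2)*(V y)^2/2 := by
      rw [hdU y hy]
      rw [← hid2]
      have := hVid y
      nlinarith [this]
    -- individual bounds
    have habsy : |y| ≤ 1 := by
      rw [abs_le]; constructor <;> linarith [hy.1, hy.2]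
    have b1 : |c₃ - 2*y*γ| ≤ 3*ε := by
      have h2 : |2*y*γ| ≤ 2*|γ| := by
        rw [show 2*y*γ = (2*y)*γ by ring, abs_mul, abs_mul, abs_two]
        nlinarith [abs_nonneg γ, abs_nonneg y]
      calc |c₃ - 2*y*γ| ≤ |c₃| + |2*y*γ| := abs_sub _ _
        _ ≤ ε + 2*ε := by linarith
        _ = 3*ε := by ring
    have b3 : |c₃ * ((1+y)*Real.log (1+y) + (1-y)*Real.log (1-y))| ≤ 4*ε := by
      have hm1 : |(1+y)*Real.log (1+y)| ≤ 2 := abs_mul_log_le h1p (by linarith)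
      have hm2 : |(1-y)*Real.log (1-y)| ≤ 2 := abs_mul_log_le h1m (by linarith)
      rw [abs_mul]
      have : |(1+y)*Real.log (1+y) + (1-y)*Real.log (1-y)| ≤ 4 := by
        calc |(1+y)*Real.log (1+y) + (1-y)*Real.log (1-y)|
            ≤ |(1+y)*Real.log (1+y)| + |(1-y)*Real.log (1-y)| := abs_add_le _ _
          _ ≤ 4 := by linarith
      nlinarith [abs_nonneg c₃]
    have b4 : |y * A y| ≤ ε := by
      rw [abs_mul]
      nlinarith [hAabs y hy, abs_nonneg (A y), abs_nonneg y]
    have b5 : (1-y^2)*(V y)^2/2 ≤ ε := by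
      have hLnn : 0 ≤ |Real.log (1-|y|)| := abs_nonneg _
      have habsy' : |y| < 1 := abs_lt.2 ⟨hy.1, hy.2⟩
      have hx0 : (0:ℝ) < 1 - |y| := by linarith
      have hx1 : (1:ℝ) - |y| ≤ 1 := by linarith [abs_nonneg y]
      have hsq0 : 0 < Real.sqrt (1-|y|) := Real.sqrt_pos.2 hx0
      have hsq1 : Real.sqrt (1-|y|) ≤ 1 := by
        have : Real.sqrt (1-|y|) ≤ Real.sqrt 1 := Real.sqrt_le_sqrt hx1
        simpa using this
      have hL2 : (Real.log (1-|y|))^2 ≤ 16 / Real.sqrt (1-|y|) := log_sq_le hx0 hx1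
      have hxL : (1-|y|) * |Real.log (1-|y|)|^2 ≤ 16 := by
        have h1 : (1-|y|) * |Real.log (1-|y|)|^2 ≤ (1-|y|) * (16 / Real.sqrt (1-|y|)) := by
          rw [sq_abs]
          exact mul_le_mul_of_nonneg_left hL2 hx0.le
        have h2 : (1-|y|) * (16 / Real.sqrt (1-|y|)) = 16 * Real.sqrt (1-|y|) := by
          rw [div_eq_mul_inv]
          nlinarith [Real.mul_self_sqrt hx0.le, mul_inv_cancel₀ hsq0.ne']
        rw [h2] at h1
        nlinarith
      have hVy : |V y| ≤ 3*ε*(1+|Real.log (1-|y|)|) := by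
        have h := hVbound y hy
        have hA := hAabs y hy
        linarith [mul_nonneg hε0 hLnn]
      have hV2 : (V y)^2 ≤ 9*ε^2*(1+|Real.log (1-|y|)|)^2 := by
        have h := pow_le_pow_left₀ (abs_nonneg (V y)) hVy 2
        rw [sq_abs] at h
        calc (V y)^2 ≤ (3*ε*(1+|Real.log (1-|y|)|))^2 := h
          _ = 9*ε^2*(1+|Real.log (1-|y|)|)^2 := by ring
      have hyy : (1:ℝ) - y^2 = (1-|y|)*(1+|y|) := by
        rw [show ((1:ℝ)-|y|)*(1+|y|) = 1 - |y|^2 by ring, sq_abs]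
      have h1f : (1-|y|)*(1+|Real.log (1-|y|)|)^2 ≤ 34 := by
        nlinarith [hxL, hx0.le, hx1, hLnn, mul_nonneg hx0.le hLnn,
          mul_nonneg hx0.le (sq_nonneg (1-|Real.log (1-|y|)|))]
      have h2f : (1:ℝ)+|y| ≤ 2 := by linarith
      have hfac : (1-y^2)*(1+|Real.log (1-|y|)|)^2 ≤ 68 := by
        rw [hyy]
        nlinarith [h1f, h2f, mul_nonneg hx0.le (sq_nonneg (1+|Real.log (1-|y|)|)), abs_nonneg y]
      have hy2 : (0:ℝ) ≤ 1 - y^2 := by nlinarith [hy.1, hy.2]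
      have hfin : (1-y^2)*(V y)^2 ≤ 612*ε^2 := by
        calc (1-y^2)*(V y)^2 ≤ (1-y^2)*(9*ε^2*(1+|Real.log (1-|y|)|)^2) :=
              mul_le_mul_of_nonneg_left hV2 hy2
          _ = 9*ε^2*((1-y^2)*(1+|Real.log (1-|y|)|)^2) := by ring
          _ ≤ 9*ε^2*68 := by
              have := mul_le_mul_of_nonneg_left hfac (by positivity : (0:ℝ) ≤ 9*ε^2)
              linarith
          _ = 612*ε^2 := by ring
      have h612 : 612*ε^2 ≤ (612/1000)*ε := by
        have h := mul_le_mul_of_nonneg_left hεμ hε0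
        calc 612*ε^2 = 612*(ε*ε) := by ring
          _ ≤ 612*(ε*(1/1000)) := by linarith
          _ = (612/1000)*ε := by ring
      linarith [hfin, hε0]
    -- combine
    rw [key]
    have hnn : 0 ≤ (1-y^2)*(V y)^2/2 := by
      have hy2 : 0 ≤ 1 - y^2 := by nlinarith [hy.1, hy.2]
      positivity
    calc |(c₃ - 2*y*γ) - c₃ * ((1+y)*Real.log (1+y) + (1-y)*Real.log (1-y))
          + y * A y - (1-y^2)*(V y)^2/2|
        ≤ |(c₃ - 2*y*γ) - c₃ * ((1+y)*Real.log (1+y) + (1-y)*Real.log (1-y)) + y * A y|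
          + |(1-y^2)*(V y)^2/2| := abs_sub _ _
      _ ≤ |(c₃ - 2*y*γ) - c₃ * ((1+y)*Real.log (1+y) + (1-y)*Real.log (1-y))|
          + |y * A y| + |(1-y^2)*(V y)^2/2| := by linarith [abs_add_le ((c₃ - 2*y*γ) - c₃ * ((1+y)*Real.log (1+y) + (1-y)*Real.log (1-y))) (y * A y)]
      _ ≤ |c₃ - 2*y*γ| + |c₃ * ((1+y)*Real.log (1+y) + (1-y)*Real.log (1-y))|
          + |y * A y| + |(1-y^2)*(V y)^2/2| := by
            linarith [abs_sub (c₃ - 2*y*γ) (c₃ * ((1+y)*Real.log (1+y) + (1-y)*Real.log (1-y)))]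
      _ ≤ 3*ε + 4*ε + ε + ε := by
            rw [abs_of_nonneg hnn]
            linarith
      _ ≤ 1000 * ε := by linarith
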